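/- As an identity of formal Laurent series (or for complex q with |q| < 1 and z ≠ 0): ∏_{i=0}^{∞}(1 − z q^i) · ∏_{i=1}^{∞}(1 − z^{−1} q^i) · ∏_{i=1}^{∞}(1 − q^i) = Σ_{k=0}^{∞} (−1)^k (1 − z^{2k+1}) z^{−k} q^{k(k+1)/2}. -/

import Mathlib

open Finset Filter Topology

namespace JTP

noncomputable def gb (q : ℂ) : ℕ → ℕ → ℂ
  | _, 0 => 1
  | 0, _+1 => 0
  | n+1, k+1 => gb q n (k+1) + q^(n-k) * gb q n k

variable (q : ℂ)

lemma gb_zero (n : ℕ) : gb q n 0 = 1 := by cases n <;> rfl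

lemma gb_succ (n k : ℕ) : gb q (n+1) (k+1) = gb q n (k+1) + q^(n-k) * gb q n k := rfl

lemma gb_eq_zero : ∀ n k : ℕ, n < k → gb q n k = 0
  | 0, _+1, _ => rfl
  | n+1, k+1, h => by
      rw [gb_succ, gb_eq_zero (n) (k+1) (by omega), gb_eq_zero n k (by omega)]
      ring

/-- `e k = k*(k-1)/2`. -/
def e (k : ℕ) : ℕ := k*(k-1)/2

lemma e_succ (k : ℕ) : e (k+1) = e k + k := by
  unfold e
  cases k with
  | zero => rfl
  | succ m =>
    simp only [Nat.add_sub_cancel]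
    rw [show (m+1+1)*(m+1) = (m+1)*m + 2*(m+1) from by ring,
      Nat.add_mul_div_left _ _ (by norm_num : 0 < 2)]

lemma cauchy (t : ℂ) : ∀ N : ℕ,
    ∏ i ∈ range N, (1 + t * q^i) = ∑ k ∈ range (N+1), q^(e k) * gb q N k * t^k
  | 0 => by simp [gb_zero, e]
  | N+1 => by
    have h0 : q^(e 0) * gb q (N+1) 0 * t^0 = 1 := by simp [gb_zero, e]
    have hsplit : ∀ k ∈ range (N+1),
        q^(e (k+1)) * gb q (N+1) (k+1) * t^(k+1)
          = q^(e (k+1)) * gb q N (k+1) * t^(k+1)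
            + (q^(e k) * gb q N k * t^k) * (t * q^N) := by
      intro k hk
      rw [gb_succ]
      have hk' : k ≤ N := Nat.lt_succ_iff.mp (mem_range.mp hk)
      have he : e (k+1) + (N - k) = e k + N := by have := e_succ k; omega
      have hq : q^(e (k+1)) * q^(N-k) = q^(e k) * q^N := by
        rw [← pow_add, ← pow_add, he]
      calc q^(e (k+1)) * (gb q N (k+1) + q^(N-k) * gb q N k) * t^(k+1)
          = q^(e (k+1)) * gb q N (k+1) * t^(k+1)
            + (q^(e (k+1)) * q^(N-k)) * gb q N k * t^(k+1) := by ring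
        _ = _ := by rw [hq]; ring
    have hA : (∑ k ∈ range (N+1), q^(e (k+1)) * gb q N (k+1) * t^(k+1)) + 1
        = ∑ k ∈ range (N+1), q^(e k) * gb q N k * t^k := by
      have h2 := Finset.sum_range_succ' (fun k => q^(e k) * gb q N k * t^k) (N+1)
      have h3 := Finset.sum_range_succ (fun k => q^(e k) * gb q N k * t^k) (N+1)
      have h4 : q^(e (N+1)) * gb q N (N+1) * t^(N+1) = 0 := by
        rw [gb_eq_zero q N (N+1) (by omega)]; ring
      have h5 : q^(e 0) * gb q N 0 * t^0 = 1 := by simp [gb_zero, e]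
      rw [h3, h4, add_zero] at h2
      rw [h5] at h2
      exact h2.symm
    rw [prod_range_succ, cauchy t N,
      Finset.sum_range_succ' (fun k => q^(e k) * gb q (N+1) k * t^k) (N+1), h0,
      Finset.sum_congr rfl hsplit, Finset.sum_add_distrib, ← Finset.sum_mul]
    linear_combination -hA

/-- partial products of `(q;q)`. -/
noncomputable def P (n : ℕ) : ℂ := ∏ j ∈ range n, (1 - q^(j+1))

lemma gb_mul_P : ∀ n k : ℕ, k ≤ n →
    gb q n k * P q k = ∏ j ∈ range k, (1 - q^(n-k+j+1))
  | _, 0, _ => by simp [gb_zero, P]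
  | 0, k+1, h => by omega
  | n+1, k+1, h => by
    rw [gb_succ, add_mul]
    rcases Nat.lt_or_ge k n with hkn | hkn
    · have ih1 := gb_mul_P n (k+1) hkn
      have ih2 := gb_mul_P n k (le_of_lt hkn)
      have hP : P q (k+1) = P q k * (1 - q^(k+1)) := by
        rw [P, P, prod_range_succ]
      calc gb q n (k+1) * P q (k+1) + q^(n-k) * gb q n k * P q (k+1)
          = gb q n (k+1) * P q (k+1)
            + q^(n-k) * (gb q n k * P q k) * (1 - q^(k+1)) := by rw [hP]; ring
        _ = (∏ j ∈ range (k+1), (1 - q^(n-(k+1)+j+1)))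
            + q^(n-k) * (∏ j ∈ range k, (1 - q^(n-k+j+1))) * (1 - q^(k+1)) := by
              rw [ih1, ih2]
        _ = ∏ j ∈ range (k+1), (1 - q^(n+1-(k+1)+j+1)) := by
          have hL : ∏ j ∈ range (k+1), (1 - q^(n-(k+1)+j+1))
              = (∏ j ∈ range k, (1 - q^(n-k+j+1))) * (1 - q^(n-k)) := by
            rw [Finset.prod_range_succ' (fun j => 1 - q^(n-(k+1)+j+1)) k]
            congr 1
            · exact Finset.prod_congr rfl (fun j _ => by congr 2; omega)
            · congr 2; omega
          have hR : ∏ j ∈ range (k+1), (1 - q^(n+1-(k+1)+j+1))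
              = (∏ j ∈ range k, (1 - q^(n-k+j+1))) * (1 - q^(n+1)) := by
            rw [prod_range_succ]
            congr 1
            · exact Finset.prod_congr rfl (fun j _ => by congr 2; omega)
            · congr 2; omega
          have hq : q^(n-k) * q^(k+1) = q^(n+1) := by
            rw [← pow_add]; congr 1; omega
          rw [hL, hR]
          linear_combination (-(∏ j ∈ range k, (1 - q^(n-k+j+1)))) * hq
    · -- k ≥ n, and k+1 ≤ n+1 means k = n
      have hk : k = n := by omega
      subst hk
      rw [gb_eq_zero q k (k+1) (by omega), zero_mul, zero_add]
      have ih := gb_mul_P k k le_rfl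
      have hP : P q (k+1) = P q k * (1 - q^(k+1)) := by rw [P, P, prod_range_succ]
      simp only [Nat.sub_self, zero_add] at ih ⊢
      rw [pow_zero, one_mul, hP, ← mul_assoc, ih, prod_range_succ]



/-- If `u` is absolutely summable, then `∏ (1 + u i)` is multipliable (possibly to zero). -/
lemma multipliable_one_add (u : ℕ → ℂ) (hu : Summable u) :
    Multipliable (fun i => 1 + u i) := by
  by_cases h : ∃ i, 1 + u i = 0
  · obtain ⟨i0, hi0⟩ := h
    refine ⟨0, ?_⟩
    have hev : ∀ᶠ s : Finset ℕ in atTop, ∏ i ∈ s, (1 + u i) = 0 := by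
      filter_upwards [eventually_ge_atTop ({i0} : Finset ℕ)] with s hs
      exact Finset.prod_eq_zero (hs (Finset.mem_singleton_self i0)) hi0
    exact Tendsto.congr' (by filter_upwards [hev] with s hs; exact hs.symm) tendsto_const_nhds
  · push_neg at h
    exact multipliable_one_add_of_summable hu.norm

lemma multipliable_one_sub (u : ℕ → ℂ) (hu : Summable u) :
    Multipliable (fun i => 1 - u i) := by
  have := multipliable_one_add (fun i => -u i) hu.neg
  simpa [sub_eq_add_neg] using this

lemma tendsto_prod_one_sub (u : ℕ → ℂ) (hu : Summable u) :
    Tendsto (fun N => ∏ i ∈ range N, (1 - u i)) atTop (𝓝 (∏' i, (1 - u i))) :=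
  (multipliable_one_sub u hu).hasProd.tendsto_prod_nat

section PBounds
variable {q : ℂ}

lemma pow_succ_lt_one (hq : ‖q‖ < 1) (j : ℕ) : ‖q‖^(j+1) < 1 :=
  pow_lt_one₀ (norm_nonneg q) hq (by omega)

lemma summable_neg_log (hq : ‖q‖ < 1) :
    Summable (fun j : ℕ => -Real.log (1 - ‖q‖^(j+1))) := by
  set r := ‖q‖ with hr
  have hr0 : 0 ≤ r := norm_nonneg q
  apply Summable.of_nonneg_of_le (f := fun j => (1-r)⁻¹ * r^(j+1))
  · intro j
    have h0 := pow_succ_lt_one hq j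
    have hx0 : (0:ℝ) ≤ r^(j+1) := by positivity
    have h1 : (0:ℝ) < 1 - r^(j+1) := by linarith
    have := Real.log_nonpos (by linarith) (by linarith : 1 - r^(j+1) ≤ 1)
    linarith
  · intro j
    have hxlt := pow_succ_lt_one hq j
    have hx0 : (0:ℝ) ≤ r^(j+1) := by positivity
    have h1 : (0:ℝ) < 1 - r^(j+1) := by linarith
    have h2 : (0:ℝ) < 1 - r := by linarith
    have key : -Real.log (1 - r^(j+1)) ≤ (1 - r^(j+1))⁻¹ - 1 := by
      rw [← Real.log_inv]
      exact Real.log_le_sub_one_of_pos (by positivity)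
    have h3 : (1 - r^(j+1))⁻¹ - 1 = r^(j+1) / (1 - r^(j+1)) := by field_simp; ring
    have h4 : r^(j+1) / (1 - r^(j+1)) ≤ r^(j+1) / (1 - r) := by
      apply div_le_div_of_nonneg_left hx0 h2
      have : r^(j+1) ≤ r := by
        calc r^(j+1) ≤ r^1 := pow_le_pow_of_le_one hr0 (le_of_lt hq) (by omega)
        _ = r := pow_one r
      linarith
    calc -Real.log (1 - r^(j+1)) ≤ r^(j+1)/(1-r^(j+1)) := by rw [← h3]; exact key
      _ ≤ r^(j+1)/(1-r) := h4
      _ = (1-r)⁻¹ * r^(j+1) := by rw [div_eq_inv_mul]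
  · apply Summable.mul_left
    have : Summable (fun j : ℕ => r^j) := summable_geometric_of_lt_one hr0 hq
    exact (summable_geometric_of_lt_one hr0 hq).mul_right r |>.congr
      (fun j => by rw [pow_succ])

/-- uniform lower bound for the norms of the partial products. -/
noncomputable def cc (q : ℂ) : ℝ := Real.exp (∑' j : ℕ, Real.log (1 - ‖q‖^(j+1)))

/-- uniform upper bound for the norms of the partial products. -/
noncomputable def CC (q : ℂ) : ℝ := Real.exp (‖q‖/(1-‖q‖))

lemma cc_pos : 0 < cc q := Real.exp_pos _

lemma norm_P_ge (hq : ‖q‖ < 1) (n : ℕ) : cc q ≤ ‖P q n‖ := by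
  set r := ‖q‖ with hr
  have hpos : ∀ j : ℕ, (0:ℝ) < 1 - r^(j+1) := fun j => by
    have := pow_succ_lt_one hq j; linarith
  have h1 : ‖P q n‖ = ∏ j ∈ range n, ‖1 - q^(j+1)‖ := norm_prod _ _
  have h2 : ∀ j ∈ range n, (1:ℝ) - r^(j+1) ≤ ‖1 - q^(j+1)‖ := by
    intro j _
    calc (1:ℝ) - r^(j+1) = ‖(1:ℂ)‖ - ‖q^(j+1)‖ := by rw [norm_one, norm_pow]
      _ ≤ ‖1 - q^(j+1)‖ := norm_sub_norm_le _ _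
  have h3 : ∏ j ∈ range n, (1 - r^(j+1)) ≤ ∏ j ∈ range n, ‖1 - q^(j+1)‖ :=
    Finset.prod_le_prod (fun j _ => le_of_lt (hpos j)) h2
  have h4 : ∏ j ∈ range n, (1 - r^(j+1))
      = Real.exp (∑ j ∈ range n, Real.log (1 - r^(j+1))) := by
    rw [Real.exp_sum]
    exact (Finset.prod_congr rfl (fun j _ => (Real.exp_log (hpos j)).symm))
  have h5 : (∑' j : ℕ, Real.log (1 - r^(j+1))) ≤ ∑ j ∈ range n, Real.log (1 - r^(j+1)) := by
    have hs := summable_neg_log hq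
    have h6 : ∑ j ∈ range n, -Real.log (1 - r^(j+1)) ≤ ∑' j : ℕ, -Real.log (1 - r^(j+1)) := by
      apply Summable.sum_le_tsum _ _ hs
      intro j _
      have h0 := pow_succ_lt_one hq j
      have hx0 : (0:ℝ) ≤ r^(j+1) := by positivity
      have := Real.log_nonpos (by linarith) (by linarith : 1 - r^(j+1) ≤ 1)
      linarith
    rw [tsum_neg] at h6
    rw [Finset.sum_neg_distrib] at h6
    linarith
  calc cc q = Real.exp (∑' j : ℕ, Real.log (1 - r^(j+1))) := rfl
    _ ≤ Real.exp (∑ j ∈ range n, Real.log (1 - r^(j+1))) := Real.exp_le_exp.2 h5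
    _ = ∏ j ∈ range n, (1 - r^(j+1)) := h4.symm
    _ ≤ ∏ j ∈ range n, ‖1 - q^(j+1)‖ := h3
    _ = ‖P q n‖ := h1.symm

lemma norm_P_le (hq : ‖q‖ < 1) (n : ℕ) : ‖P q n‖ ≤ CC q := by
  set r := ‖q‖ with hr
  have hr0 : (0:ℝ) ≤ r := norm_nonneg q
  have h1 : ‖P q n‖ = ∏ j ∈ range n, ‖1 - q^(j+1)‖ := norm_prod _ _
  have h2 : ∏ j ∈ range n, ‖1 - q^(j+1)‖ ≤ ∏ j ∈ range n, Real.exp (r^(j+1)) := by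
    apply Finset.prod_le_prod (fun j _ => norm_nonneg _)
    intro j _
    calc ‖1 - q^(j+1)‖ ≤ ‖(1:ℂ)‖ + ‖q^(j+1)‖ := norm_sub_le _ _
      _ = r^(j+1) + 1 := by rw [norm_one, norm_pow]; ring
      _ ≤ Real.exp (r^(j+1)) := Real.add_one_le_exp _
  have h3 : ∏ j ∈ range n, Real.exp (r^(j+1)) = Real.exp (∑ j ∈ range n, r^(j+1)) :=
    (Real.exp_sum _ _).symm
  have h4 : ∑ j ∈ range n, r^(j+1) ≤ r/(1-r) := by
    have hsum : Summable (fun j : ℕ => r^(j+1)) :=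
      (summable_geometric_of_lt_one hr0 hq).mul_right r |>.congr (fun j => by rw [pow_succ])
    have h5 : ∑ j ∈ range n, r^(j+1) ≤ ∑' j : ℕ, r^(j+1) :=
      Summable.sum_le_tsum _ (fun j _ => by positivity) hsum
    have h6 : ∑' j : ℕ, r^(j+1) = r/(1-r) := by
      have : ∑' j : ℕ, r^(j+1) = (∑' j : ℕ, r^j) * r := by
        rw [← tsum_mul_right]
        exact tsum_congr (fun j => by rw [pow_succ])
      rw [this, tsum_geometric_of_lt_one hr0 hq, inv_mul_eq_div]
    linarith
  rw [h1]
  calc ∏ j ∈ range n, ‖1 - q^(j+1)‖ ≤ Real.exp (∑ j ∈ range n, r^(j+1)) := h3 ▸ h2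
    _ ≤ Real.exp (r/(1-r)) := Real.exp_le_exp.2 h4

end PBounds

lemma two_e (m : ℕ) : 2 * e m = m * (m-1) := by
  cases m with
  | zero => rfl
  | succ k =>
    unfold e
    simp only [Nat.add_sub_cancel]
    exact Nat.mul_div_cancel' (by simpa [Nat.mul_comm] using (Nat.even_mul_succ_self k).two_dvd)

lemma two_e_int (m : ℕ) : (2 * (e m : ℤ)) = (m : ℤ) * ((m : ℤ) - 1) := by
  cases m with
  | zero => simp [e]
  | succ k =>
    have h2 : 2 * e (k+1) = (k+1) * k := by
      have := two_e (k+1); simpa using this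
    have h3 := congrArg (fun x : ℕ => (x : ℤ)) h2
    push_cast at h3 ⊢
    linarith

lemma gb_mul_mul {q : ℂ} {n k : ℕ} (hk : k ≤ n) :
    gb q n k * P q k * P q (n-k) = P q n := by
  rw [gb_mul_P q n k hk]
  have h1 : P q n = P q (n-k) * ∏ j ∈ range k, (1 - q^((n-k)+j+1)) := by
    have h2 := Finset.prod_range_add (fun j => 1 - q^(j+1)) (n-k) k
    calc P q n = ∏ x ∈ range ((n-k)+k), (1 - q^(x+1)) := by rw [P, Nat.sub_add_cancel hk]
      _ = P q (n-k) * ∏ j ∈ range k, (1 - q^((n-k)+j+1)) := by simpa [P] using h2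
  rw [h1]
  ring

lemma one_sub_pow_ne {q : ℂ} (hq : ‖q‖ < 1) (j : ℕ) : (1:ℂ) - q^(j+1) ≠ 0 := by
  intro h
  have h2 : q^(j+1) = 1 := by linear_combination -h
  have := pow_succ_lt_one hq j
  rw [← norm_pow, h2] at this
  simp at this

lemma P_ne {q : ℂ} (hq : ‖q‖ < 1) (n : ℕ) : P q n ≠ 0 :=
  Finset.prod_ne_zero_iff.2 (fun j _ => one_sub_pow_ne hq j)

lemma gb_eq_div {q : ℂ} (hq : ‖q‖ < 1) {n k : ℕ} (hk : k ≤ n) :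
    gb q n k = P q n * (P q k)⁻¹ * (P q (n-k))⁻¹ := by
  have h0 := gb_mul_mul (q := q) hk
  have hPk := P_ne hq k
  have hPnk := P_ne hq (n-k)
  field_simp
  linear_combination h0

lemma prod_zpow_sum (x : ℂ) (hx : x ≠ 0) (n : ℕ) (f : ℕ → ℤ) :
    ∏ i ∈ range n, x^(f i) = x^(∑ i ∈ range n, f i) := by
  induction n with
  | zero => simp
  | succ m ih => rw [prod_range_succ, sum_range_succ, ih, ← zpow_add₀ hx]

/-- The summand in the finite triple-product identity. -/
noncomputable def c (q z : ℂ) (N k : ℕ) : ℂ :=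
  gb q (2*N) k * P q N * q ^ (((e k + e (N+1) : ℕ) : ℤ) - ((N*k : ℕ) : ℤ)) *
    (-z) ^ ((k:ℤ) - (N:ℤ))

/-- The paired summand. -/
noncomputable def f (q z : ℂ) (N j : ℕ) : ℂ :=
  (if j < N then c q z N (N+1+j) else 0) + (if j ≤ N then c q z N (N-j) else 0)

lemma stepA {q z : ℂ} (hq0 : q ≠ 0) (hz : z ≠ 0) (N : ℕ) :
    (∏ i ∈ range N, (1 - z*q^i)) * (∏ i ∈ range N, (1 - z⁻¹*q^(i+1))) * P q N
      = ∑ k ∈ range (2*N+1), c q z N k := by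
  have hw0 : (-z : ℂ) ≠ 0 := neg_ne_zero.2 hz
  set t : ℂ := (-z) * q^(-(N:ℤ)) with ht
  have hA := cauchy q t (2*N)
  -- split the LHS product
  have hsplit : ∏ i ∈ range (2*N), (1 + t*q^i)
      = ((-z)^N * q^(-((e (N+1) : ℕ) : ℤ))) *
        ((∏ i ∈ range N, (1 - z⁻¹*q^(i+1))) * (∏ i ∈ range N, (1 - z*q^i))) := by
    rw [two_mul, Finset.prod_range_add]
    have h2 : ∀ i ∈ range N, 1 + t*q^(N+i) = 1 - z*q^i := by
      intro i _
      have hqq : q^(-(N:ℤ)) * q^(N+i) = q^i := by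
        rw [← zpow_natCast q (N+i), ← zpow_add₀ hq0, show (-(N:ℤ) + ((N+i : ℕ) : ℤ)) = (i:ℤ) by push_cast; ring, zpow_natCast]
      calc 1 + t*q^(N+i) = 1 + (-z) * (q^(-(N:ℤ)) * q^(N+i)) := by rw [ht]; ring
        _ = 1 - z*q^i := by rw [hqq]; ring
    have h1 : ∀ i ∈ range N, 1 + t*q^i
        = ((-z) * q^((i:ℤ) - N)) * (1 - z⁻¹ * q^((N:ℤ) - i)) := by
      intro i _
      have hqq : q^((i:ℤ)-N) * q^((N:ℤ)-i) = 1 := by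
        rw [← zpow_add₀ hq0, show ((i:ℤ)-N) + ((N:ℤ)-i) = 0 by ring, zpow_zero]
      have hqt : t * q^i = (-z) * q^((i:ℤ) - N) := by
        rw [ht, mul_assoc, ← zpow_natCast q i, ← zpow_add₀ hq0]
        congr 2
        ring
      have hzz : z * z⁻¹ = 1 := mul_inv_cancel₀ hz
      calc 1 + t*q^i = 1 + (-z) * q^((i:ℤ)-N) := by rw [hqt]
        _ = ((-z) * q^((i:ℤ) - N)) * (1 - z⁻¹ * q^((N:ℤ) - i)) := by
            have expand : ((-z) * q^((i:ℤ) - N)) * (1 - z⁻¹ * q^((N:ℤ) - i))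
                = (-z) * q^((i:ℤ)-N) + (z * z⁻¹) * (q^((i:ℤ)-N) * q^((N:ℤ)-i)) := by ring
            rw [expand, hzz, hqq]
            ring
    rw [Finset.prod_congr rfl h1, Finset.prod_congr rfl h2, Finset.prod_mul_distrib,
      Finset.prod_mul_distrib, Finset.prod_const, Finset.card_range,
      prod_zpow_sum q hq0 N (fun i => (i:ℤ) - N)]
    have hsum : (∑ i ∈ range N, ((i:ℤ) - N)) = -((e (N+1) : ℕ) : ℤ) := by
      rw [Finset.sum_sub_distrib, Finset.sum_const, Finset.card_range]
      have h3 : ((∑ i ∈ range N, i : ℕ) : ℤ) = ∑ i ∈ range N, (i:ℤ) := by push_cast; rfl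
      have h5 := two_e_int (N+1)
      have h6 : ((∑ i ∈ range N, i : ℕ) : ℤ) * 2 = (N:ℤ) * ((N:ℤ)-1) := by
        have h4 := Finset.sum_range_id_mul_two N
        cases N with
        | zero => simp
        | succ m =>
          simp only [Nat.add_sub_cancel] at h4
          have h4' := congrArg (fun x : ℕ => (x : ℤ)) h4
          push_cast at h4' ⊢
          linarith
      push_cast at h5 ⊢
      simp only [nsmul_eq_mul]
      rw [← h3]
      linarith
    rw [hsum]
    have hrefl := Finset.prod_range_reflect (fun i => 1 - z⁻¹ * q^((N:ℤ) - i)) N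
    have h7 : ∀ j ∈ range N, 1 - z⁻¹ * q^((N:ℤ) - ((N - 1 - j : ℕ) : ℤ)) = 1 - z⁻¹*q^(j+1) := by
      intro j hj
      have hj' := mem_range.mp hj
      have : (N:ℤ) - ((N - 1 - j : ℕ) : ℤ) = ((j+1 : ℕ) : ℤ) := by omega
      rw [this, zpow_natCast]
    rw [← hrefl, Finset.prod_congr rfl h7]
    ring
  rw [hsplit] at hA
  -- pointwise identification of summands
  have hterm : ∀ k : ℕ, ((-z)^(-(N:ℤ)) * q^(((e (N+1) : ℕ)) : ℤ) * P q N) *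
      (q^(e k) * gb q (2*N) k * t^k) = c q z N k := by
    intro k
    have h1 : t^k = (-z)^(k:ℤ) * q^((-(N:ℤ))*(k:ℤ)) := by
      rw [ht, mul_pow, ← zpow_natCast ((-z) : ℂ) k, ← zpow_natCast (q^(-(N:ℤ))) k, ← zpow_mul]
    have hqgroup : q^(((e (N+1) : ℕ)) : ℤ) * (q^(e k) : ℂ) * q^((-(N:ℤ))*(k:ℤ))
        = q ^ (((e k + e (N+1) : ℕ) : ℤ) - ((N*k : ℕ) : ℤ)) := by
      rw [← zpow_natCast q (e k), ← zpow_add₀ hq0, ← zpow_add₀ hq0]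
      congr 1
      push_cast
      ring
    have hwgroup : (-z)^(-(N:ℤ)) * ((-z)^(k:ℤ)) = (-z)^((k:ℤ) - (N:ℤ)) := by
      rw [← zpow_add₀ hw0]
      congr 1
      ring
    rw [c, h1]
    calc ((-z)^(-(N:ℤ)) * q^(((e (N+1) : ℕ)) : ℤ) * P q N) *
          (q^(e k) * gb q (2*N) k * ((-z)^(k:ℤ) * q^((-(N:ℤ))*(k:ℤ))))
        = (gb q (2*N) k * P q N) *
            (q^(((e (N+1) : ℕ)) : ℤ) * (q^(e k) : ℂ) * q^((-(N:ℤ))*(k:ℤ))) *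
            ((-z)^(-(N:ℤ)) * ((-z)^(k:ℤ))) := by ring
      _ = _ := by rw [hqgroup, hwgroup]
  rw [← Finset.sum_congr rfl (fun k _ => hterm k), ← Finset.mul_sum, ← hA]
  have hc1 : (-z)^(-(N:ℤ)) * ((-z)^N : ℂ) = 1 := by
    rw [← zpow_natCast ((-z) : ℂ) N, ← zpow_add₀ hw0]
    simp
  have hc2 : q^(((e (N+1) : ℕ)) : ℤ) * q^(-(((e (N+1) : ℕ)) : ℤ)) = 1 := by
    rw [← zpow_add₀ hq0]
    simp
  calc (∏ i ∈ range N, (1 - z*q^i)) * (∏ i ∈ range N, (1 - z⁻¹*q^(i+1))) * P q N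
      = ((-z)^(-(N:ℤ)) * ((-z)^N : ℂ)) * (q^(((e (N+1) : ℕ)) : ℤ) * q^(-(((e (N+1) : ℕ)) : ℤ))) *
        ((∏ i ∈ range N, (1 - z*q^i)) * (∏ i ∈ range N, (1 - z⁻¹*q^(i+1))) * P q N) := by
          rw [hc1, hc2]; ring
    _ = _ := by ring

lemma stepB (q z : ℂ) (N : ℕ) :
    ∑' j : ℕ, f q z N j = ∑ k ∈ range (2*N+1), c q z N k := by
  have hsupp : ∀ j ∉ range (N+1), f q z N j = 0 := by
    intro j hj
    have hj' : N + 1 ≤ j := by simpa using hj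
    rw [f, if_neg (by omega), if_neg (by omega), add_zero]
  rw [tsum_eq_sum hsupp]
  unfold f
  rw [Finset.sum_add_distrib]
  have h1 : ∑ j ∈ range (N+1), (if j < N then c q z N (N+1+j) else 0)
      = ∑ j ∈ range N, c q z N (N+1+j) := by
    rw [Finset.sum_range_succ, if_neg (by omega), add_zero]
    exact Finset.sum_congr rfl (fun j hj => if_pos (mem_range.mp hj))
  have h2 : ∑ j ∈ range (N+1), (if j ≤ N then c q z N (N-j) else 0)
      = ∑ k ∈ range (N+1), c q z N k := by
    have h3 : ∑ j ∈ range (N+1), (if j ≤ N then c q z N (N-j) else 0)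
        = ∑ j ∈ range (N+1), c q z N (N-j) :=
      Finset.sum_congr rfl (fun j hj => if_pos (Nat.lt_succ_iff.mp (mem_range.mp hj)))
    rw [h3]
    have h4 := Finset.sum_range_reflect (fun k => c q z N k) (N+1)
    simpa using h4
  rw [h1, h2]
  have h6 := Finset.sum_range_add (fun k => c q z N k) (N+1) N
  rw [show 2*N+1 = N+1+N by omega, h6]
  ring

lemma E1 (N j : ℕ) :
    ((e (N+1+j) + e (N+1) : ℕ) : ℤ) - ((N*(N+1+j) : ℕ) : ℤ) = ((e (j+1) : ℕ) : ℤ) := by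
  have h1 := two_e_int (N+1+j)
  have h2 := two_e_int (N+1)
  have h3 := two_e_int (j+1)
  have hring : ((N:ℤ)+1+j) * (((N:ℤ)+1+j) - 1) + ((N:ℤ)+1) * (((N:ℤ)+1) - 1)
      - 2*((N:ℤ)*((N:ℤ)+1+j)) = ((j:ℤ)+1) * (((j:ℤ)+1) - 1) := by ring
  push_cast at h1 h2 h3 ⊢
  linarith

lemma E2 (N j : ℕ) (hj : j ≤ N) :
    ((e (N-j) + e (N+1) : ℕ) : ℤ) - ((N*(N-j) : ℕ) : ℤ) = ((e (j+1) : ℕ) : ℤ) := by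
  have h1 := two_e_int (N-j)
  have h2 := two_e_int (N+1)
  have h3 := two_e_int (j+1)
  have hc : ((N-j : ℕ) : ℤ) = (N:ℤ) - j := by omega
  have hring : ((N:ℤ)-j) * (((N:ℤ)-j) - 1) + ((N:ℤ)+1) * (((N:ℤ)+1) - 1)
      - 2*((N:ℤ)*((N:ℤ)-j)) = ((j:ℤ)+1) * (((j:ℤ)+1) - 1) := by ring
  rw [hc] at h1
  push_cast at h1 h2 h3 ⊢
  rw [hc]
  linarith

lemma c_eq₁ {q z : ℂ} (hq : ‖q‖ < 1) (hq0 : q ≠ 0) {N j : ℕ} (hj : j + 1 ≤ N) :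
    c q z N (N+1+j)
      = (P q (2*N) * (P q (N+1+j))⁻¹ * (P q (N-(j+1)))⁻¹ * P q N)
        * q^(e (j+1)) * (-z)^(j+1) := by
  rw [c, gb_eq_div hq (show N+1+j ≤ 2*N by omega)]
  have h1 : 2*N - (N+1+j) = N - (j+1) := by omega
  have h2 : q ^ (((e (N+1+j) + e (N+1) : ℕ) : ℤ) - ((N*(N+1+j) : ℕ) : ℤ)) = q^(e (j+1)) := by
    rw [E1 N j, zpow_natCast]
  have h3 : (-z) ^ (((N+1+j : ℕ):ℤ) - (N:ℤ)) = (-z)^(j+1) := by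
    rw [show ((N+1+j : ℕ):ℤ) - (N:ℤ) = ((j+1 : ℕ) : ℤ) by push_cast; ring, zpow_natCast]
  rw [h1, h2, h3]

lemma c_eq₂ {q z : ℂ} (hq : ‖q‖ < 1) (hq0 : q ≠ 0) (hz : z ≠ 0) {N j : ℕ} (hj : j ≤ N) :
    c q z N (N-j)
      = (P q (2*N) * (P q (N-j))⁻¹ * (P q (N+j))⁻¹ * P q N)
        * q^(e (j+1)) * ((-z)^(-(j:ℤ))) := by
  rw [c, gb_eq_div hq (show N-j ≤ 2*N by omega)]
  have h1 : 2*N - (N-j) = N + j := by omega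
  have h2 : q ^ (((e (N-j) + e (N+1) : ℕ) : ℤ) - ((N*(N-j) : ℕ) : ℤ)) = q^(e (j+1)) := by
    rw [E2 N j hj, zpow_natCast]
  have h3 : (-z) ^ (((N-j : ℕ):ℤ) - (N:ℤ)) = (-z)^(-(j:ℤ)) := by
    congr 1
    omega
  rw [h1, h2, h3]

noncomputable def Pinf (q : ℂ) : ℂ := ∏' j : ℕ, (1 - q^(j+1))

lemma summable_qpow {q : ℂ} (hq : ‖q‖ < 1) : Summable (fun j : ℕ => q^(j+1)) :=
  ((summable_geometric_of_norm_lt_one hq).mul_right q).congr (fun j => (pow_succ q j).symm)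

lemma tendsto_P_atTop {q : ℂ} (hq : ‖q‖ < 1) :
    Tendsto (fun n => P q n) atTop (𝓝 (Pinf q)) :=
  tendsto_prod_one_sub _ (summable_qpow hq)

lemma norm_Pinf_ge {q : ℂ} (hq : ‖q‖ < 1) : cc q ≤ ‖Pinf q‖ :=
  ge_of_tendsto ((tendsto_P_atTop hq).norm) (Eventually.of_forall (norm_P_ge hq))

lemma Pinf_ne {q : ℂ} (hq : ‖q‖ < 1) : Pinf q ≠ 0 := by
  intro h
  have h1 := norm_Pinf_ge hq
  have h2 := cc_pos (q := q)
  rw [h, norm_zero] at h1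
  linarith

lemma e_succ_eq (j : ℕ) : e (j+1) = j*(j+1)/2 := by
  unfold e
  simp only [Nat.add_sub_cancel]
  rw [Nat.mul_comm]

section Limits

variable {q z : ℂ}

lemma tendsto_P_comp {q : ℂ} (hq : ‖q‖ < 1) {u : ℕ → ℕ} (hu : Tendsto u atTop atTop) :
    Tendsto (fun N => P q (u N)) atTop (𝓝 (Pinf q)) :=
  (tendsto_P_atTop hq).comp hu

lemma tendsto_quot (hq : ‖q‖ < 1) {u v : ℕ → ℕ} (hu : Tendsto u atTop atTop)
    (hv : Tendsto v atTop atTop) :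
    Tendsto (fun N => P q (2*N) * (P q (u N))⁻¹ * (P q (v N))⁻¹ * P q N) atTop (𝓝 1) := by
  have h2 : Tendsto (fun N : ℕ => 2*N) atTop atTop :=
    tendsto_atTop_mono (fun n => by simp only [id_eq]; omega) tendsto_id
  have T := (((tendsto_P_comp hq h2).mul ((tendsto_P_comp hq hu).inv₀ (Pinf_ne hq))).mul
    ((tendsto_P_comp hq hv).inv₀ (Pinf_ne hq))).mul (tendsto_P_atTop hq)
  have hval : Pinf q * (Pinf q)⁻¹ * (Pinf q)⁻¹ * Pinf q = 1 := by
    field_simp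
    exact div_self (Pinf_ne hq)
  rwa [hval] at T

lemma tendsto_c₁ (hq : ‖q‖ < 1) (hq0 : q ≠ 0) (j : ℕ) :
    Tendsto (fun N => c q z N (N+1+j)) atTop (𝓝 (q^(e (j+1)) * (-z)^(j+1))) := by
  have hu : Tendsto (fun N : ℕ => N+1+j) atTop atTop :=
    tendsto_atTop_mono (fun n => by simp only [id_eq]; omega) tendsto_id
  have T := (tendsto_quot hq hu (tendsto_sub_atTop_nat (j+1))).mul_const
    ((q : ℂ)^(e (j+1)) * (-z)^(j+1))
  rw [one_mul] at T
  apply T.congr'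
  filter_upwards [eventually_ge_atTop (j+1)] with N hN
  rw [c_eq₁ hq hq0 hN]
  ring

lemma tendsto_c₂ (hq : ‖q‖ < 1) (hq0 : q ≠ 0) (hz : z ≠ 0) (j : ℕ) :
    Tendsto (fun N => c q z N (N-j)) atTop (𝓝 (q^(e (j+1)) * (-z)^(-(j:ℤ)))) := by
  have hu : Tendsto (fun N : ℕ => N+j) atTop atTop :=
    tendsto_atTop_mono (fun n => by simp only [id_eq]; omega) tendsto_id
  have T := (tendsto_quot hq (tendsto_sub_atTop_nat j) hu).mul_const
    ((q : ℂ)^(e (j+1)) * (-z)^(-(j:ℤ)))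
  rw [one_mul] at T
  apply T.congr'
  filter_upwards [eventually_ge_atTop j] with N hN
  rw [c_eq₂ hq hq0 hz hN]
  ring

lemma g_eq (hz : z ≠ 0) (j : ℕ) :
    q^(e (j+1)) * (-z)^(j+1) + q^(e (j+1)) * (-z)^(-(j:ℤ))
      = (-1)^j * (1 - z^(2*j+1)) * z^(-(j:ℤ)) * q^(j*(j+1)/2) := by
  have h1 : (-z)^(-(j:ℤ)) = (-1:ℂ)^j * z^(-(j:ℤ)) := by
    rw [zpow_neg, zpow_neg, zpow_natCast, zpow_natCast, neg_pow, mul_inv]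
    congr 1
    rw [← inv_pow]
    norm_num
  have h2 : z^(2*j+1) * z^(-(j:ℤ)) = z^(j+1) := by
    rw [← zpow_natCast z (2*j+1), ← zpow_natCast z (j+1), ← zpow_add₀ hz]
    congr 1
    push_cast
    ring
  rw [e_succ_eq, neg_pow z (j+1), h1]
  linear_combination ((-1:ℂ)^j * q^(j*(j+1)/2)) * h2

lemma tendsto_f (hq : ‖q‖ < 1) (hq0 : q ≠ 0) (hz : z ≠ 0) (j : ℕ) :
    Tendsto (fun N => f q z N j) atTop
      (𝓝 ((-1)^j * (1 - z^(2*j+1)) * z^(-(j:ℤ)) * q^(j*(j+1)/2))) := by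
  have T := (tendsto_c₁ (z := z) hq hq0 j).add (tendsto_c₂ hq hq0 hz j)
  rw [g_eq hz j] at T
  apply T.congr'
  filter_upwards [eventually_ge_atTop (j+1)] with N hN
  rw [f, if_pos (by omega : j < N), if_pos (by omega : j ≤ N)]

end Limits

section Bounds

variable {q z : ℂ}

noncomputable def B (q : ℂ) : ℝ := CC q * (cc q)⁻¹ * (cc q)⁻¹ * CC q

lemma B_pos : 0 < B q := by
  have h1 := cc_pos (q := q)
  have h2 : (0:ℝ) < CC q := Real.exp_pos _
  exact mul_pos (mul_pos (mul_pos h2 (inv_pos.2 h1)) (inv_pos.2 h1)) h2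

lemma B_nonneg : 0 ≤ B q := le_of_lt B_pos

lemma norm_P_inv_le (hq : ‖q‖ < 1) (n : ℕ) : ‖(P q n)⁻¹‖ ≤ (cc q)⁻¹ := by
  rw [norm_inv]
  exact inv_anti₀ cc_pos (norm_P_ge hq n)

lemma norm_quot_le (hq : ‖q‖ < 1) (a b N : ℕ) :
    ‖P q (2*N) * (P q a)⁻¹ * (P q b)⁻¹ * P q N‖ ≤ B q := by
  rw [norm_mul, norm_mul, norm_mul, B]
  have h1 := cc_pos (q := q)
  have hC : (0:ℝ) ≤ CC q := le_of_lt (Real.exp_pos _)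
  have hc : (0:ℝ) ≤ (cc q)⁻¹ := le_of_lt (inv_pos.2 h1)
  exact mul_le_mul (mul_le_mul (mul_le_mul (norm_P_le hq _) (norm_P_inv_le hq _)
    (norm_nonneg _) hC) (norm_P_inv_le hq _) (norm_nonneg _) (mul_nonneg hC hc))
    (norm_P_le hq _) (norm_nonneg _) (mul_nonneg (mul_nonneg hC hc) hc)

noncomputable def bnd (q z : ℂ) (j : ℕ) : ℝ :=
  B q * ((‖z‖^(j+1) + (‖z‖⁻¹)^j) * ‖q‖^(e (j+1)))

lemma bnd_nonneg (j : ℕ) : 0 ≤ bnd q z j :=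
  mul_nonneg B_nonneg (by positivity)

lemma norm_f_le (hq : ‖q‖ < 1) (hq0 : q ≠ 0) (hz : z ≠ 0) (N j : ℕ) :
    ‖f q z N j‖ ≤ bnd q z j := by
  have hB := B_nonneg (q := q)
  have hbr : (0:ℝ) ≤ ‖q‖^(e (j+1)) := by positivity
  have h1 : ‖(if j < N then c q z N (N+1+j) else 0 : ℂ)‖
      ≤ B q * (‖z‖^(j+1) * ‖q‖^(e (j+1))) := by
    split_ifs with h
    · rw [c_eq₁ hq hq0 (by omega : j+1 ≤ N), norm_mul, norm_mul, norm_pow, norm_pow, norm_neg]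
      calc ‖P q (2*N) * (P q (N+1+j))⁻¹ * (P q (N-(j+1)))⁻¹ * P q N‖ * ‖q‖^(e (j+1)) * ‖z‖^(j+1)
          ≤ B q * ‖q‖^(e (j+1)) * ‖z‖^(j+1) := by
            gcongr
            exact norm_quot_le hq _ _ _
        _ = B q * (‖z‖^(j+1) * ‖q‖^(e (j+1))) := by ring
    · simp only [norm_zero]
      exact mul_nonneg hB (by positivity)
  have h2 : ‖(if j ≤ N then c q z N (N-j) else 0 : ℂ)‖
      ≤ B q * ((‖z‖⁻¹)^j * ‖q‖^(e (j+1))) := by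
    split_ifs with h
    · rw [c_eq₂ hq hq0 hz h, norm_mul, norm_mul, norm_pow]
      have hzn : ‖(-z : ℂ)^(-(j:ℤ))‖ = (‖z‖⁻¹)^j := by
        rw [norm_zpow, norm_neg, zpow_neg, zpow_natCast, inv_pow]
      rw [hzn]
      calc ‖P q (2*N) * (P q (N-j))⁻¹ * (P q (N+j))⁻¹ * P q N‖ * ‖q‖^(e (j+1)) * (‖z‖⁻¹)^j
          ≤ B q * ‖q‖^(e (j+1)) * (‖z‖⁻¹)^j := by
            gcongr
            exact norm_quot_le hq _ _ _
        _ = B q * ((‖z‖⁻¹)^j * ‖q‖^(e (j+1))) := by ring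
    · simp only [norm_zero]
      exact mul_nonneg hB (by positivity)
  calc ‖f q z N j‖ ≤ ‖(if j < N then c q z N (N+1+j) else 0 : ℂ)‖
        + ‖(if j ≤ N then c q z N (N-j) else 0 : ℂ)‖ := norm_add_le _ _
    _ ≤ B q * (‖z‖^(j+1) * ‖q‖^(e (j+1))) + B q * ((‖z‖⁻¹)^j * ‖q‖^(e (j+1))) := by
        exact add_le_add h1 h2
    _ = bnd q z j := by rw [bnd]; ring

lemma summable_bnd (hq : ‖q‖ < 1) (hq0 : q ≠ 0) (hz : z ≠ 0) :
    Summable (bnd q z) := by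
  set r := ‖q‖ with hr
  set a := ‖z‖ with ha
  set b := ‖z‖⁻¹ with hb
  have hr0 : 0 < r := norm_pos_iff.2 hq0
  have ha0 : 0 < a := norm_pos_iff.2 hz
  have hb0 : 0 < b := by positivity
  have hB := B_nonneg (q := q)
  have hrt : Tendsto (fun j : ℕ => r^(j+1)) atTop (𝓝 0) :=
    (tendsto_pow_atTop_nhds_zero_of_lt_one (le_of_lt hr0) hq).comp (tendsto_add_atTop_nat 1)
  have hev1 : ∀ᶠ j : ℕ in atTop, r^(j+1) * a ≤ 1/2 := by
    have := hrt.mul_const a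
    rw [zero_mul] at this
    exact this.eventually_le_const (by norm_num)
  have hev2 : ∀ᶠ j : ℕ in atTop, r^(j+1) * b ≤ 1/2 := by
    have := hrt.mul_const b
    rw [zero_mul] at this
    exact this.eventually_le_const (by norm_num)
  apply summable_of_ratio_norm_eventually_le (r := 1/2) (by norm_num)
  filter_upwards [hev1, hev2] with j h1 h2
  rw [Real.norm_of_nonneg (bnd_nonneg _), Real.norm_of_nonneg (bnd_nonneg _)]
  have hre : (0:ℝ) ≤ r^(e (j+1)) := by positivity
  have k1 : a^(j+1+1) * r^(j+1) ≤ 1/2 * a^(j+1) := by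
    calc a^(j+1+1) * r^(j+1) = (r^(j+1)*a) * a^(j+1) := by ring
      _ ≤ 1/2 * a^(j+1) := by
          apply mul_le_mul_of_nonneg_right h1 (by positivity)
  have k2 : b^(j+1) * r^(j+1) ≤ 1/2 * b^j := by
    calc b^(j+1) * r^(j+1) = (r^(j+1)*b) * b^j := by ring
      _ ≤ 1/2 * b^j := by
          apply mul_le_mul_of_nonneg_right h2 (by positivity)
  have hsplit : bnd q z (j+1) = B q * r^(e (j+1)) * (a^(j+1+1) * r^(j+1))
      + B q * r^(e (j+1)) * (b^(j+1) * r^(j+1)) := by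
    rw [bnd, e_succ (j+1), pow_add]
    ring
  have hBre : (0:ℝ) ≤ B q * r^(e (j+1)) := mul_nonneg hB (by positivity)
  have m1 := mul_le_mul_of_nonneg_left k1 hBre
  have m2 := mul_le_mul_of_nonneg_left k2 hBre
  calc bnd q z (j+1) = B q * r^(e (j+1)) * (a^(j+1+1) * r^(j+1))
        + B q * r^(e (j+1)) * (b^(j+1) * r^(j+1)) := hsplit
    _ ≤ B q * r^(e (j+1)) * (1/2 * a^(j+1)) + B q * r^(e (j+1)) * (1/2 * b^j) := by
        exact add_le_add m1 m2
    _ = 1/2 * bnd q z j := by rw [bnd]; ring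

end Bounds

end JTP

open JTP in
/-- Jacobi's triple product identity in the paired form (2.4):
`(z;q)_∞ (q/z;q)_∞ (q;q)_∞ = Σ_{k≥0} (-1)^k (1 - z^{2k+1}) z^{-k} q^{k(k+1)/2}`,
for complex `q` with `|q| < 1` and nonzero complex `z`. -/
theorem jacobi_triple_product_paired (q z : ℂ) (hq : ‖q‖ < 1) (hz : z ≠ 0) :
    (∏' i : ℕ, (1 - z * q ^ i)) * (∏' i : ℕ, (1 - z⁻¹ * q ^ (i + 1))) *
        (∏' i : ℕ, (1 - q ^ (i + 1))) =
      ∑' k : ℕ, (-1 : ℂ) ^ k * (1 - z ^ (2 * k + 1)) * z ^ (-(k : ℤ)) * q ^ (k * (k + 1) / 2) := by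
  rcases eq_or_ne q 0 with rfl | hq0
  · have h1 : (∏' i : ℕ, (1 - z * (0:ℂ) ^ i)) = 1 - z := by
      have hp : HasProd (fun i : ℕ => 1 - z * (0:ℂ)^i) (1 - z * (0:ℂ)^0) :=
        hasProd_single 0 (fun i hi => by rw [zero_pow hi]; ring)
      simpa using hp.tprod_eq
    have h2 : (∏' i : ℕ, (1 - z⁻¹ * (0:ℂ) ^ (i+1))) = 1 := by
      have he : (fun i : ℕ => 1 - z⁻¹ * (0:ℂ)^(i+1)) = fun _ => 1 := by
        funext i; rw [zero_pow (Nat.succ_ne_zero i)]; ring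
      rw [he, tprod_one]
    have h3 : (∏' i : ℕ, (1 - (0:ℂ) ^ (i+1))) = 1 := by
      have he : (fun i : ℕ => 1 - (0:ℂ)^(i+1)) = fun _ => 1 := by
        funext i; rw [zero_pow (Nat.succ_ne_zero i)]; ring
      rw [he, tprod_one]
    have h4 : (∑' k : ℕ, (-1 : ℂ) ^ k * (1 - z ^ (2 * k + 1)) * z ^ (-(k : ℤ)) *
        (0:ℂ) ^ (k * (k + 1) / 2)) = 1 - z := by
      rw [tsum_eq_single 0 ?_]
      · norm_num
      · intro k hk
        have hk1 : 1 ≤ k := Nat.one_le_iff_ne_zero.2 hk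
        have hpos : k * (k+1) / 2 ≠ 0 := by
          have h5 : 2 ≤ k * (k+1) := by
            calc 2 = 1 * 2 := by norm_num
              _ ≤ k * (k+1) := Nat.mul_le_mul hk1 (by omega)
          have h6 : 1 ≤ k * (k+1) / 2 := (Nat.le_div_iff_mul_le (by norm_num)).2 (by omega)
          omega
        rw [zero_pow hpos, mul_zero]
    rw [h1, h2, h3, h4]
    ring
  · have hsum1 : Summable (fun i : ℕ => z * q^i) :=
      (summable_geometric_of_norm_lt_one hq).mul_left z
    have hsum2 : Summable (fun i : ℕ => z⁻¹ * q^(i+1)) := (summable_qpow hq).mul_left z⁻¹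
    have T1 := tendsto_prod_one_sub _ hsum1
    have T2 := tendsto_prod_one_sub _ hsum2
    have T3 := tendsto_P_atTop hq
    have TL := (T1.mul T2).mul T3
    have hLeq : ∀ N, (∏ i ∈ Finset.range N, (1 - z*q^i)) *
        (∏ i ∈ Finset.range N, (1 - z⁻¹*q^(i+1))) * P q N
        = ∑' j : ℕ, f q z N j := fun N => (stepA hq0 hz N).trans (stepB q z N).symm
    have TR := tendsto_tsum_of_dominated_convergence (summable_bnd hq hq0 hz)
      (tendsto_f hq hq0 hz) (Eventually.of_forall (fun N j => norm_f_le hq hq0 hz N j))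
    have TL' := TL.congr hLeq
    exact tendsto_nhds_unique TL' TR
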